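/- arXiv:1701.07286 — 2 statements merged into one kernel-verified Lean document; each statement's English description precedes it below -/
import Mathlib

section
/- Suppose $1 \leq m \leq n$ are integers, $0 < r < \infty$, $w \in \mathbb{R}^n$ with $|w| \leq r$, $T$ is an $m$-dimensional subspace of $\mathbb{R}^n$, and $f : T \to T^\perp$ is a locally Lipschitz function with $f(0) = 0$. Then $\delta_{\mathrm{gr} f}(w) \leq |T^\perp_\natural(w) - f(T_\natural(w))| \leq (2 + \mathrm{Lip}(f|_{\mathbf{B}(0,2r)})) \, \delta_{\mathrm{gr} f}(w)$. -/
open MeasureTheory Metric Filter Set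
open scoped ENNReal Topology NNReal

/-- Orthogonal projection onto a subspace, as a map into the ambient space. -/
noncomputable def projS {n : ℕ} (T : Submodule ℝ (EuclideanSpace ℝ (Fin n)))
    (x : EuclideanSpace ℝ (Fin n)) : EuclideanSpace ℝ (Fin n) :=
  (Submodule.orthogonalProjectionOnto T x : EuclideanSpace ℝ (Fin n))

private lemma norm_le_norm_add_of_orth {n : ℕ} {T : Submodule ℝ (EuclideanSpace ℝ (Fin n))}
    {u v : EuclideanSpace ℝ (Fin n)} (hu : u ∈ T) (hv : v ∈ Tᗮ) :
    ‖u‖ ≤ ‖u + v‖ ∧ ‖v‖ ≤ ‖u + v‖ := by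
  have h0 : (inner ℝ u v : ℝ) = 0 := (Submodule.mem_orthogonal T v).1 hv u hu
  have hsq : ‖u + v‖ ^ 2 = ‖u‖ ^ 2 + ‖v‖ ^ 2 := by
    rw [norm_add_sq_real, h0]; ring
  constructor <;>
    nlinarith [norm_nonneg u, norm_nonneg v, norm_nonneg (u + v)]

set_option maxHeartbeats 1000000 in
theorem stmt8 {m n : ℕ} (hm : 1 ≤ m) (hmn : m ≤ n) (r : ℝ) (hr : 0 < r)
    (w : EuclideanSpace ℝ (Fin n)) (hw : ‖w‖ ≤ r)
    (T : Submodule ℝ (EuclideanSpace ℝ (Fin n))) (hT : Module.finrank ℝ T = m)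
    (f : T → Tᗮ) (hf : LocallyLipschitz f) (hf0 : f 0 = 0)
    (K : ℝ≥0) (hK : LipschitzOnWith K f (Metric.closedBall (0 : T) (2 * r))) :
    Metric.infDist w (Set.range fun χ : T =>
        (χ : EuclideanSpace ℝ (Fin n)) + (f χ : EuclideanSpace ℝ (Fin n))) ≤
      ‖projS Tᗮ w - (f (Submodule.orthogonalProjectionOnto T w) : EuclideanSpace ℝ (Fin n))‖ ∧
    ‖projS Tᗮ w - (f (Submodule.orthogonalProjectionOnto T w) : EuclideanSpace ℝ (Fin n))‖ ≤
      (2 + (K : ℝ)) * Metric.infDist w (Set.range fun χ : T =>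
        (χ : EuclideanSpace ℝ (Fin n)) + (f χ : EuclideanSpace ℝ (Fin n))) := by
  set P : T := Submodule.orthogonalProjectionOnto T w with hP
  set Q : Tᗮ := Submodule.orthogonalProjectionOnto Tᗮ w with hQ
  have hwPQ : w = (P : EuclideanSpace ℝ (Fin n)) + (Q : EuclideanSpace ℝ (Fin n)) :=
    (Submodule.starProjection_add_starProjection_orthogonal (K := T) w).symm
  have hQeq : projS Tᗮ w = (Q : EuclideanSpace ℝ (Fin n)) := rfl
  set S := Set.range fun χ : T =>
    (χ : EuclideanSpace ℝ (Fin n)) + (f χ : EuclideanSpace ℝ (Fin n)) with hS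
  have hSne : S.Nonempty := ⟨(0 : EuclideanSpace ℝ (Fin n)) + (f 0 : EuclideanSpace ℝ (Fin n)),
    ⟨0, rfl⟩⟩
  have hPnorm : ‖P‖ ≤ r := by
    have := (norm_le_norm_add_of_orth P.2 Q.2).1
    rw [← hwPQ] at this
    exact this.trans hw
  have hQnorm : ‖(Q : EuclideanSpace ℝ (Fin n))‖ ≤ r := by
    have := (norm_le_norm_add_of_orth P.2 Q.2).2
    rw [← hwPQ] at this
    exact this.trans hw
  have hPball : P ∈ Metric.closedBall (0 : T) (2 * r) := by
    simp only [Metric.mem_closedBall, dist_zero_right]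
    linarith
  have h0ball : (0 : T) ∈ Metric.closedBall (0 : T) (2 * r) := by
    simp only [Metric.mem_closedBall, dist_self]
    positivity
  have hfP : ‖(f P : EuclideanSpace ℝ (Fin n))‖ ≤ K * r := by
    have h2 := hK.dist_le_mul P hPball 0 h0ball
    rw [hf0, dist_zero_right, dist_zero_right] at h2
    calc ‖(f P : EuclideanSpace ℝ (Fin n))‖ = ‖f P‖ := rfl
      _ ≤ K * ‖P‖ := h2
      _ ≤ K * r := mul_le_mul_of_nonneg_left hPnorm K.coe_nonneg
  have hdecomp : ∀ χ : T, w - ((χ : EuclideanSpace ℝ (Fin n)) + (f χ : EuclideanSpace ℝ (Fin n))) =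
      ((P - χ : T) : EuclideanSpace ℝ (Fin n)) + ((Q - f χ : Tᗮ) : EuclideanSpace ℝ (Fin n)) := by
    intro χ
    push_cast
    rw [hwPQ]; abel
  have hdistT : ∀ χ : T, ‖(P - χ : T)‖ ≤
      ‖w - ((χ : EuclideanSpace ℝ (Fin n)) + (f χ : EuclideanSpace ℝ (Fin n)))‖ := by
    intro χ
    rw [hdecomp χ]
    exact (norm_le_norm_add_of_orth (P - χ).2 (Q - f χ).2).1
  have hdistQ : ∀ χ : T, ‖((Q - f χ : Tᗮ) : EuclideanSpace ℝ (Fin n))‖ ≤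
      ‖w - ((χ : EuclideanSpace ℝ (Fin n)) + (f χ : EuclideanSpace ℝ (Fin n)))‖ := by
    intro χ
    rw [hdecomp χ]
    exact (norm_le_norm_add_of_orth (P - χ).2 (Q - f χ).2).2
  constructor
  · have hmem : (P : EuclideanSpace ℝ (Fin n)) + (f P : EuclideanSpace ℝ (Fin n)) ∈ S :=
      ⟨P, rfl⟩
    have h := Metric.infDist_le_dist_of_mem (x := w) hmem
    rw [dist_eq_norm] at h
    refine h.trans (le_of_eq ?_)
    rw [hQeq]
    congr 1
    rw [hwPQ]; abel
  · rw [hQeq]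
    have hC : (0 : ℝ) < 2 + K := by positivity
    have key : ∀ y ∈ S,
        ‖(Q : EuclideanSpace ℝ (Fin n)) - (f P : EuclideanSpace ℝ (Fin n))‖ ≤
          (2 + (K : ℝ)) * dist w y := by
      rintro y ⟨χ, rfl⟩
      simp only [dist_eq_norm]
      set d := ‖w - ((χ : EuclideanSpace ℝ (Fin n)) + (f χ : EuclideanSpace ℝ (Fin n)))‖ with hd
      have hd0 : 0 ≤ d := norm_nonneg _
      by_cases hχ : χ ∈ Metric.closedBall (0 : T) (2 * r)
      · have hlip' : dist (f χ) (f P) ≤ K * dist χ P := hK.dist_le_mul χ hχ P hPball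
        have h1 := norm_sub_le_norm_sub_add_norm_sub
          ((Q : EuclideanSpace ℝ (Fin n))) ((f χ : EuclideanSpace ℝ (Fin n)))
          ((f P : EuclideanSpace ℝ (Fin n)))
        have h2 : ‖(Q : EuclideanSpace ℝ (Fin n)) - (f χ : EuclideanSpace ℝ (Fin n))‖ ≤ d := by
          have := hdistQ χ
          simpa using this
        have h3 : ‖(f χ : EuclideanSpace ℝ (Fin n)) - (f P : EuclideanSpace ℝ (Fin n))‖ ≤
            K * d := by
          have hdd : dist χ P ≤ d := by
            have := hdistT χ
            rw [← dist_eq_norm, dist_comm] at this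
            exact this
          calc ‖(f χ : EuclideanSpace ℝ (Fin n)) - (f P : EuclideanSpace ℝ (Fin n))‖
              = dist (f χ) (f P) := by rw [dist_eq_norm]; rfl
            _ ≤ K * dist χ P := hlip'
            _ ≤ K * d := mul_le_mul_of_nonneg_left hdd K.coe_nonneg
        calc ‖(Q : EuclideanSpace ℝ (Fin n)) - (f P : EuclideanSpace ℝ (Fin n))‖
            ≤ d + K * d := by linarith
          _ ≤ (2 + K) * d := by nlinarith [K.coe_nonneg]
      · have hχfar : 2 * r < ‖χ‖ := by
          simpa only [Metric.mem_closedBall, dist_zero_right, not_le] using hχ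
        have hrd : r ≤ d := by
          have h1 : ‖χ‖ - ‖P‖ ≤ ‖(P - χ : T)‖ := by
            have h := norm_sub_norm_le χ P
            calc ‖χ‖ - ‖P‖ ≤ ‖χ - P‖ := h
              _ = ‖(P - χ : T)‖ := by rw [norm_sub_rev]
          have := hdistT χ
          linarith
        calc ‖(Q : EuclideanSpace ℝ (Fin n)) - (f P : EuclideanSpace ℝ (Fin n))‖
            ≤ ‖(Q : EuclideanSpace ℝ (Fin n))‖ + ‖(f P : EuclideanSpace ℝ (Fin n))‖ :=
              norm_sub_le _ _
          _ ≤ r + K * r := add_le_add hQnorm hfP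
          _ ≤ (2 + K) * r := by nlinarith [K.coe_nonneg]
          _ ≤ (2 + K) * d := by nlinarith [K.coe_nonneg]
    rw [← div_le_iff₀' hC, Metric.infDist_eq_iInf]
    have : Nonempty S := hSne.to_subtype
    refine le_ciInf fun y => ?_
    rw [div_le_iff₀' hC]
    exact key y y.2
end

section
/- Let $1 \leq m \leq n$ and $k \geq 1$ be integers, $T$ an $m$-dimensional subspace of $\mathbb{R}^n$, and let $P, Q : T \to T^\perp$ be polynomial functions of degree at most $k$ with $P(0) = 0$ and $D^i Q(0) = 0$ for $i = 0, \ldots, k-1$ (so $Q$ is homogeneous of degree $k$). Suppose for every $\epsilon > 0$ there exists $\rho > 0$ such that for every $z \in \mathrm{gr}(P) \cap \mathbf{B}(0,r)$ and $0 < r \leq \rho$, the set $\mathbf{C}(T,z,\epsilon r, \epsilon r^k) \cap \{w : \delta_{\mathrm{gr}(Q)}(w) \leq \epsilon r^k\}$ is nonempty. Then $P = Q$. -/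
open MeasureTheory Metric Filter Set
open scoped ENNReal Topology

/-- `P` is a polynomial function of degree at most `k`. -/
def PolyDegLE {E F : Type*} [NormedAddCommGroup E] [NormedSpace ℝ E]
    [NormedAddCommGroup F] [NormedSpace ℝ F] (k : ℕ) (P : E → F) : Prop :=
  ∃ φ : ∀ i : ℕ, ContinuousMultilinearMap ℝ (fun _ : Fin i => E) F,
    ∀ x, P x = ∑ i ∈ Finset.range (k + 1), φ i (fun _ => x)

private lemma poly_coeff_zero {F : Type*} [NormedAddCommGroup F] [NormedSpace ℝ F]
    (k : ℕ) (c : ℕ → F)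
    (h : ∀ ε : ℝ, 0 < ε → ∃ δ : ℝ, 0 < δ ∧ ∀ t : ℝ, 0 < t → t ≤ δ →
      ‖∑ i ∈ Finset.range (k+1), t ^ i • c i‖ ≤ ε * t ^ k) :
    ∀ j, j ≤ k → c j = 0 := by
  intro j
  induction j using Nat.strong_induction_on with
  | _ j ih =>
  intro hjk
  have hprev : ∀ i, i < j → c i = 0 := fun i hi => ih i hi (hi.le.trans hjk)
  have key : ∀ ε : ℝ, 0 < ε → ‖c j‖ ≤ ε := by
    intro ε hε
    set S : ℝ := ∑ i ∈ Finset.range (k+1), ‖c i‖ with hSdef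
    have hS0 : 0 ≤ S := Finset.sum_nonneg fun _ _ => norm_nonneg _
    obtain ⟨δ, hδ, hb⟩ := h (ε/2) (by positivity)
    set t : ℝ := min (min δ 1) (ε / (2 * (S+1))) with htdef
    have ht0 : 0 < t := lt_min (lt_min hδ one_pos) (by positivity)
    have htδ : t ≤ δ := le_trans (min_le_left _ _) (min_le_left _ _)
    have ht1 : t ≤ 1 := le_trans (min_le_left _ _) (min_le_right _ _)
    have htε : t ≤ ε / (2 * (S+1)) := min_le_right _ _
    -- split the sum
    have hsum : ∑ i ∈ Finset.range (k+1), t ^ i • c i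
        = t ^ j • c j + ∑ i ∈ Finset.Ico (j+1) (k+1), t ^ i • c i := by
      rw [Finset.range_eq_Ico,
        ← Finset.sum_Ico_consecutive _ (Nat.zero_le j) (by omega : j ≤ k+1)]
      have h1 : ∑ i ∈ Finset.Ico 0 j, t ^ i • c i = 0 :=
        Finset.sum_eq_zero fun i hi => by
          rw [hprev i (Finset.mem_Ico.1 hi).2, smul_zero]
      rw [h1, zero_add,
        Finset.sum_eq_sum_Ico_succ_bot (by omega : j < k+1)]
    have htail : ‖∑ i ∈ Finset.Ico (j+1) (k+1), t ^ i • c i‖ ≤ t ^ (j+1) * S := by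
      refine le_trans (norm_sum_le _ _) ?_
      have : ∀ i ∈ Finset.Ico (j+1) (k+1), ‖t ^ i • c i‖ ≤ t ^ (j+1) * ‖c i‖ := by
        intro i hi
        rw [norm_smul, Real.norm_eq_abs, abs_pow, abs_of_pos ht0]
        exact mul_le_mul_of_nonneg_right
          (pow_le_pow_of_le_one ht0.le ht1 (Finset.mem_Ico.1 hi).1) (norm_nonneg _)
      refine le_trans (Finset.sum_le_sum this) ?_
      rw [← Finset.mul_sum]
      refine mul_le_mul_of_nonneg_left ?_ (by positivity)
      refine Finset.sum_le_sum_of_subset_of_nonneg ?_ (fun _ _ _ => norm_nonneg _)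
      intro i hi
      rw [Finset.mem_range]
      exact (Finset.mem_Ico.1 hi).2
    have hmain : t ^ j * ‖c j‖ ≤ (ε/2) * t ^ k + t ^ (j+1) * S := by
      have h1 : t ^ j • c j = (∑ i ∈ Finset.range (k+1), t ^ i • c i)
          - ∑ i ∈ Finset.Ico (j+1) (k+1), t ^ i • c i := by
        rw [hsum]; abel
      have h2 : ‖t ^ j • c j‖ = t ^ j * ‖c j‖ := by
        rw [norm_smul, Real.norm_eq_abs, abs_pow, abs_of_pos ht0]
      calc t ^ j * ‖c j‖ = ‖t ^ j • c j‖ := h2.symm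
        _ ≤ ‖∑ i ∈ Finset.range (k+1), t ^ i • c i‖
            + ‖∑ i ∈ Finset.Ico (j+1) (k+1), t ^ i • c i‖ := by
              rw [h1]; exact norm_sub_le _ _
        _ ≤ (ε/2) * t ^ k + t ^ (j+1) * S :=
              add_le_add (hb t ht0 htδ) htail
    have hdiv : ‖c j‖ ≤ (ε/2) * t ^ (k - j) + t * S := by
      have hkj : k = j + (k - j) := by omega
      have e1 : t ^ k = t ^ j * t ^ (k - j) := by rw [← pow_add, Nat.add_sub_cancel' hjk]
      have e2 : t ^ (j+1) = t ^ j * t := by rw [pow_succ]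
      rw [e1, e2] at hmain
      have htj : (0:ℝ) < t ^ j := pow_pos ht0 j
      nlinarith [htj]
    have hb1 : (ε/2) * t ^ (k - j) ≤ ε/2 := by
      have : t ^ (k - j) ≤ 1 := pow_le_one₀ ht0.le ht1
      nlinarith
    have hb2 : t * S ≤ ε/2 := by
      have h1 : t * (2 * (S + 1)) ≤ ε := (le_div_iff₀ (by positivity : (0:ℝ) < 2 * (S+1))).1 htε
      nlinarith
    linarith
  have : ‖c j‖ ≤ 0 := le_of_forall_pos_le_add fun ε hε => by
    simpa using key ε hε
  simpa using norm_le_zero_iff.1 this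

set_option maxHeartbeats 2000000 in
set_option synthInstance.maxHeartbeats 1000000 in
theorem stmt10 {m n k : ℕ} (hm : 1 ≤ m) (hmn : m ≤ n) (hk : 1 ≤ k)
    (T : Submodule ℝ (EuclideanSpace ℝ (Fin n))) (hT : Module.finrank ℝ T = m)
    (P Q : T → Tᗮ) (hP : PolyDegLE k P) (hP0 : P 0 = 0)
    (hQ : ∃ ψ : ContinuousMultilinearMap ℝ (fun _ : Fin k => T) Tᗮ,
      ∀ χ : T, Q χ = ψ (fun _ => χ))
    (hyp : ∀ ε : ℝ, 0 < ε → ∃ ρ : ℝ, 0 < ρ ∧ ∀ r : ℝ, 0 < r → r ≤ ρ →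
      ∀ z ∈ (Set.range fun χ : T => (χ : EuclideanSpace ℝ (Fin n)) +
          (P χ : EuclideanSpace ℝ (Fin n))) ∩ Metric.closedBall 0 r,
        ∃ w : EuclideanSpace ℝ (Fin n),
          ‖projS T (w - z)‖ < ε * r ∧ ‖projS Tᗮ (w - z)‖ < ε * r ^ k ∧
          Metric.infDist w (Set.range fun χ : T => (χ : EuclideanSpace ℝ (Fin n)) +
            (Q χ : EuclideanSpace ℝ (Fin n))) ≤ ε * r ^ k) :
    P = Q := by
  obtain ⟨φ, hφ⟩ := hP
  obtain ⟨ψ, hψ⟩ := hQ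
  have hk0 : k ≠ 0 := by omega
  haveI : Nonempty (Fin k) := ⟨⟨0, hk⟩⟩
  set E := EuclideanSpace ℝ (Fin n)
  -- the constant coefficient vanishes
  have hφ0 : ∀ x : T, φ 0 (fun _ => x) = 0 := by
    intro x
    have h0 : (0 : ↥Tᗮ) = ∑ i ∈ Finset.range (k+1), φ i (fun _ => (0:T)) := by
      rw [← hφ 0, hP0]
    rw [Finset.sum_range_succ'] at h0
    have hz : ∀ i ∈ Finset.range k, φ (i+1) (fun _ => (0:T)) = 0 := fun i _ =>
      (φ (i+1)).map_coord_zero 0 rfl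
    rw [Finset.sum_eq_zero hz, zero_add] at h0
    have hx0 : (fun _ : Fin 0 => x) = (fun _ : Fin 0 => (0:T)) := by
      funext i; exact i.elim0
    rw [hx0, ← h0]
  -- scaling identities
  have hsmulφ : ∀ (t : ℝ) (x : T) (i : ℕ),
      φ i (fun _ => t • x) = t ^ i • φ i (fun _ => x) := by
    intro t x i
    have := (φ i).map_smul_univ (fun _ : Fin i => t) (fun _ => x)
    simpa [Finset.prod_const] using this
  have hsmulψ : ∀ (t : ℝ) (x : T), ψ (fun _ => t • x) = t ^ k • ψ (fun _ => x) := by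
    intro t x
    have := ψ.map_smul_univ (fun _ : Fin k => t) (fun _ => x)
    simpa [Finset.prod_const] using this
  -- projection facts
  have pT_T : ∀ x : T, projS T (x : E) = (x : E) := by
    intro x
    simp only [projS, Submodule.orthogonalProjectionOnto_mem_subspace_eq_self]
  have pT_O : ∀ v : Tᗮ, projS T (v : E) = 0 := by
    intro v
    simp only [projS, Submodule.orthogonalProjectionOnto_apply_of_mem_orthogonal v.2,
      ZeroMemClass.coe_zero]
  have pO_O : ∀ v : Tᗮ, projS Tᗮ (v : E) = (v : E) := by
    intro v
    simp only [projS, Submodule.orthogonalProjectionOnto_mem_subspace_eq_self]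
  have pO_T : ∀ x : T, projS Tᗮ (x : E) = 0 := by
    intro x
    simp only [projS, Submodule.orthogonalProjectionOnto_orthogonal_apply_eq_zero x.2,
      ZeroMemClass.coe_zero]
  have p_sub : ∀ (S' : Submodule ℝ E) (a b : E),
      projS S' (a - b) = projS S' a - projS S' b := by
    intro S' a b
    simp [projS, map_sub]
  -- Q 0 = 0
  have hQ0 : ψ (fun _ : Fin k => (0:T)) = 0 := ψ.map_coord_zero ⟨0, hk⟩ rfl
  have hQne : (Set.range fun χ : T => (χ : E) + (Q χ : E)).Nonempty := by
    refine ⟨(0:T) + ((Q 0 : ↥Tᗮ) : E), ⟨0, rfl⟩⟩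
  funext χ
  -- the key analytic estimate
  have p_add : ∀ (S' : Submodule ℝ E) (a b : E),
      projS S' (a + b) = projS S' a + projS S' b := by
    intro S' a b
    simp [projS, map_add]
  have p_norm : ∀ (S' : Submodule ℝ E) (x : E), ‖projS S' x‖ ≤ ‖x‖ := by
    intro S' x
    have h1 : ‖projS S' x‖ = ‖Submodule.orthogonalProjectionOnto S' x‖ := Submodule.norm_coe _
    have h2 := (Submodule.orthogonalProjectionOnto S').le_opNorm x
    have h3 := Submodule.orthogonalProjectionOnto_norm_le S'
    have h4 : ‖Submodule.orthogonalProjectionOnto S'‖ * ‖x‖ ≤ 1 * ‖x‖ :=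
      mul_le_mul_of_nonneg_right h3 (norm_nonneg _)
    rw [h1]
    linarith
  have key : ∀ ε : ℝ, 0 < ε → ∃ δ : ℝ, 0 < δ ∧ ∀ t : ℝ, 0 < t → t ≤ δ →
      ‖P (t • χ) - Q (t • χ)‖ ≤ ε * t ^ k := by
    intro ε hε
    set A : ℝ := ∑ i ∈ Finset.range (k+1), ‖φ i (fun _ => χ)‖ with hAdef
    have hA0 : 0 ≤ A := Finset.sum_nonneg fun _ _ => norm_nonneg _
    set M : ℝ := ‖χ‖ + A + 1 with hMdef
    have hM0 : 0 < M := by rw [hMdef]; positivity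
    have hMk0 : (0:ℝ) < M ^ k := pow_pos hM0 k
    set B : ℝ := 2 * M ^ k + M with hBdef
    have hB0 : 0 < B := by rw [hBdef]; linarith
    set C : ℝ := 3 * M ^ k + ‖ψ‖ * (k:ℝ) * (‖χ‖ + B) ^ (k-1) * B with hCdef
    have hC0 : 0 < C := by
      have h1 : (0:ℝ) < 3 * M ^ k := by linarith
      have h2 : (0:ℝ) ≤ ‖ψ‖ * (k:ℝ) * (‖χ‖ + B) ^ (k-1) * B := by
        have hψ0 : (0:ℝ) ≤ ‖ψ‖ := ContinuousMultilinearMap.opNorm_nonneg ψ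
        have hxB : (0:ℝ) ≤ ‖χ‖ + B := add_nonneg (norm_nonneg _) hB0.le
        exact mul_nonneg (mul_nonneg (mul_nonneg hψ0 (Nat.cast_nonneg _))
          (pow_nonneg hxB _)) hB0.le
      rw [hCdef]; linarith
    set ε₁ : ℝ := min 1 (ε / C) with hε₁def
    have hε₁0 : 0 < ε₁ := lt_min one_pos (div_pos hε hC0)
    have hε₁1 : ε₁ ≤ 1 := min_le_left _ _
    have hε₁C : ε₁ * C ≤ ε := by
      have h1 : ε₁ ≤ ε / C := min_le_right _ _
      rw [le_div_iff₀ hC0] at h1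
      exact h1
    obtain ⟨ρ, hρ0, hR⟩ := hyp ε₁ hε₁0
    refine ⟨min 1 (ρ / M), lt_min one_pos (div_pos hρ0 hM0), ?_⟩
    intro t ht0 htδ
    have ht1 : t ≤ 1 := htδ.trans (min_le_left _ _)
    have htρ : M * t ≤ ρ := by
      have h1 : t ≤ ρ / M := htδ.trans (min_le_right _ _)
      rw [le_div_iff₀ hM0] at h1
      linarith
    set r : ℝ := M * t with hrdef
    have hr0 : 0 < r := mul_pos hM0 ht0
    have htk : t ^ k ≤ t := by
      calc t ^ k ≤ t ^ 1 := pow_le_pow_of_le_one ht0.le ht1 hk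
        _ = t := pow_one t
    -- bound on ‖P (t • χ)‖
    have hPt : ‖P (t • χ)‖ ≤ A * t := by
      rw [hφ]
      calc ‖∑ i ∈ Finset.range (k+1), φ i (fun _ => t • χ)‖
          ≤ ∑ i ∈ Finset.range (k+1), ‖φ i (fun _ => t • χ)‖ := norm_sum_le _ _
        _ ≤ ∑ i ∈ Finset.range (k+1), ‖φ i (fun _ => χ)‖ * t := by
            refine Finset.sum_le_sum fun i _ => ?_
            rw [hsmulφ, norm_smul, Real.norm_eq_abs, abs_pow, abs_of_pos ht0]
            rcases Nat.eq_zero_or_pos i with h0 | h1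
            · subst h0
              simp [hφ0]
            · have hti : t ^ i ≤ t := by
                calc t ^ i ≤ t ^ 1 := pow_le_pow_of_le_one ht0.le ht1 h1
                  _ = t := pow_one t
              calc t ^ i * ‖φ i fun _ => χ‖ ≤ t * ‖φ i fun _ => χ‖ :=
                    mul_le_mul_of_nonneg_right hti (norm_nonneg _)
                _ = ‖φ i fun _ => χ‖ * t := mul_comm _ _
        _ = A * t := by rw [← Finset.sum_mul]
    set z : E := ((t • χ : T) : E) + ((P (t • χ) : ↥Tᗮ) : E) with hzdef
    have hznorm : ‖z‖ ≤ r := by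
      have h1 : ‖((t • χ : T) : E)‖ = t * ‖χ‖ := by
        rw [Submodule.norm_coe, norm_smul, Real.norm_eq_abs, abs_of_pos ht0]
      have h2 : ‖((P (t • χ) : ↥Tᗮ) : E)‖ = ‖P (t • χ)‖ := Submodule.norm_coe _
      calc ‖z‖ ≤ ‖((t • χ : T) : E)‖ + ‖((P (t • χ) : ↥Tᗮ) : E)‖ := norm_add_le _ _
        _ ≤ t * ‖χ‖ + A * t := by rw [h1, h2]; linarith [hPt]
        _ ≤ r := by rw [hrdef, hMdef]; nlinarith [ht0.le, hA0, norm_nonneg χ]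
    have hmem : z ∈ (Set.range fun χ : T => (χ : E) + (P χ : E)) ∩ Metric.closedBall 0 r :=
      ⟨⟨t • χ, rfl⟩, mem_closedBall_zero_iff.2 hznorm⟩
    obtain ⟨w, hw1, hw2, hw3⟩ := hR r hr0 htρ z hmem
    have hrk0 : (0:ℝ) < ε₁ * r ^ k := mul_pos hε₁0 (pow_pos hr0 k)
    obtain ⟨y, hy, hdy⟩ := (Metric.infDist_lt_iff hQne).1
      (lt_of_le_of_lt hw3 (by linarith : ε₁ * r ^ k < 2 * (ε₁ * r ^ k)))
    obtain ⟨χ', rfl⟩ := hy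
    have hyw : ‖((χ' : E) + (Q χ' : E)) - w‖ ≤ 2 * (ε₁ * r ^ k) := by
      rw [← dist_eq_norm, dist_comm]
      exact hdy.le
    -- tangential estimate
    have hTyz : projS T (((χ' : E) + (Q χ' : E)) - z) = (χ' : E) - ((t • χ : T) : E) := by
      rw [hzdef, p_sub, p_add, p_add, pT_T, pT_T, pT_O, pT_O, add_zero, add_zero]
    have hTbound : ‖(χ' : E) - ((t • χ : T) : E)‖ ≤ 2 * (ε₁ * r ^ k) + ε₁ * r := by
      rw [← hTyz]
      have hsplit : ((χ' : E) + (Q χ' : E)) - z = (((χ' : E) + (Q χ' : E)) - w) + (w - z) := by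
        abel
      rw [hsplit, p_add]
      refine (norm_add_le _ _).trans (add_le_add ?_ hw1.le)
      exact (p_norm _ _).trans hyw
    -- normal estimate
    have hOyz : projS Tᗮ (((χ' : E) + (Q χ' : E)) - z) = (Q χ' : E) - ((P (t • χ) : ↥Tᗮ) : E) := by
      rw [hzdef, p_sub, p_add, p_add, pO_O, pO_O, pO_T, pO_T, zero_add, zero_add]
    have hObound : ‖(Q χ' : E) - ((P (t • χ) : ↥Tᗮ) : E)‖ ≤ 2 * (ε₁ * r ^ k) + ε₁ * r ^ k := by
      rw [← hOyz]
      have hsplit : ((χ' : E) + (Q χ' : E)) - z = (((χ' : E) + (Q χ' : E)) - w) + (w - z) := by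
        abel
      rw [hsplit, p_add]
      refine (norm_add_le _ _).trans (add_le_add ?_ hw2.le)
      exact (p_norm _ _).trans hyw
    -- move to subtype norms
    have hχ'sub : ‖χ' - t • χ‖ ≤ 2 * (ε₁ * r ^ k) + ε₁ * r := by
      rw [Submodule.coe_norm, Submodule.coe_sub]
      exact hTbound
    have hQsub : ‖Q χ' - P (t • χ)‖ ≤ 3 * (ε₁ * r ^ k) := by
      rw [Submodule.coe_norm, Submodule.coe_sub]
      have := hObound
      linarith
    -- bound ‖χ' - t•χ‖ ≤ ε₁ * t * B
    have hrk : r ^ k = M ^ k * t ^ k := by rw [hrdef, mul_pow]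
    have hχ'tB : ‖χ' - t • χ‖ ≤ ε₁ * t * B := by
      have h1 : 2 * (ε₁ * r ^ k) + ε₁ * r ≤ ε₁ * t * B := by
        rw [hrk, hrdef, hBdef]
        nlinarith [mul_le_mul_of_nonneg_left htk (mul_nonneg (mul_nonneg (by norm_num) hε₁0.le) hMk0.le : (0:ℝ) ≤ 2 * ε₁ * M ^ k)]
      linarith [hχ'sub]
    have htχnorm : ‖t • χ‖ ≤ t * (‖χ‖ + B) := by
      rw [norm_smul, Real.norm_eq_abs, abs_of_pos ht0]
      nlinarith [ht0.le, hB0, norm_nonneg χ]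
    have hχ'norm : ‖χ'‖ ≤ t * (‖χ‖ + B) := by
      have h1 : ‖χ'‖ ≤ ‖t • χ‖ + ‖χ' - t • χ‖ := by
        calc ‖χ'‖ = ‖t • χ + (χ' - t • χ)‖ := by rw [add_sub_cancel]
          _ ≤ ‖t • χ‖ + ‖χ' - t • χ‖ := norm_add_le _ _
      have h2 : ‖t • χ‖ = t * ‖χ‖ := by
        rw [norm_smul, Real.norm_eq_abs, abs_of_pos ht0]
      nlinarith [hχ'tB, mul_le_mul_of_nonneg_right hε₁1 (mul_nonneg ht0.le hB0.le : (0:ℝ) ≤ t * B)]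
    -- homogeneous comparison
    have hψest : ‖Q χ' - Q (t • χ)‖
        ≤ ‖ψ‖ * (k:ℝ) * (t * (‖χ‖ + B)) ^ (k-1) * (ε₁ * t * B) := by
      rw [hψ, hψ]
      have hh := ψ.norm_image_sub_le (fun _ => χ') (fun _ => t • χ)
      simp only [Fintype.card_fin] at hh
      have hn1 : ‖(fun _ : Fin k => χ')‖ = ‖χ'‖ := pi_norm_const _
      have hn2 : ‖(fun _ : Fin k => t • χ)‖ = ‖t • χ‖ := pi_norm_const _
      have hn3 : ‖(fun _ : Fin k => χ') - (fun _ : Fin k => t • χ)‖ = ‖χ' - t • χ‖ := by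
        have : (fun _ : Fin k => χ') - (fun _ : Fin k => t • χ)
            = fun _ : Fin k => (χ' - t • χ) := rfl
        rw [this]
        exact pi_norm_const _
      rw [hn1, hn2, hn3] at hh
      refine hh.trans ?_
      have hmaxle : max ‖χ'‖ ‖t • χ‖ ≤ t * (‖χ‖ + B) := max_le hχ'norm htχnorm
      have hmax0 : (0:ℝ) ≤ max ‖χ'‖ ‖t • χ‖ := le_max_of_le_left (norm_nonneg _)
      have hψk : (0:ℝ) ≤ ‖ψ‖ * (k:ℝ) := by
        have hψ0 : (0:ℝ) ≤ ‖ψ‖ := ContinuousMultilinearMap.opNorm_nonneg ψ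
        exact mul_nonneg hψ0 (Nat.cast_nonneg _)
      refine mul_le_mul ?_ hχ'tB (norm_nonneg _) ?_
      · exact mul_le_mul_of_nonneg_left (pow_le_pow_left₀ hmax0 hmaxle _) hψk
      · exact mul_nonneg hψk
          (pow_nonneg (mul_nonneg ht0.le (add_nonneg (norm_nonneg _) hB0.le)) _)
    -- combine
    have htkk : t ^ (k-1) * t = t ^ k := by
      rw [← pow_succ, Nat.sub_add_cancel hk]
    have hfinal : ‖P (t • χ) - Q (t • χ)‖ ≤ ε₁ * C * t ^ k := by
      have h1 : ‖P (t • χ) - Q (t • χ)‖ ≤ ‖Q χ' - P (t • χ)‖ + ‖Q χ' - Q (t • χ)‖ := by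
        have : P (t • χ) - Q (t • χ) = -(Q χ' - P (t • χ)) + (Q χ' - Q (t • χ)) := by abel
        rw [this]
        exact (norm_add_le _ _).trans (by rw [norm_neg])
      have h2 : (3:ℝ) * (ε₁ * r ^ k) = ε₁ * (3 * M ^ k) * t ^ k := by
        rw [hrk]; ring
      have h3 : ‖ψ‖ * (k:ℝ) * (t * (‖χ‖ + B)) ^ (k-1) * (ε₁ * t * B)
          = ε₁ * (‖ψ‖ * (k:ℝ) * (‖χ‖ + B) ^ (k-1) * B) * t ^ k := by
        rw [mul_pow, ← htkk]; ring
      have h4 : ε₁ * (3 * M ^ k) * t ^ k + ε₁ * (‖ψ‖ * (k:ℝ) * (‖χ‖ + B) ^ (k-1) * B) * t ^ k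
          = ε₁ * C * t ^ k := by rw [hCdef]; ring
      calc ‖P (t • χ) - Q (t • χ)‖ ≤ ‖Q χ' - P (t • χ)‖ + ‖Q χ' - Q (t • χ)‖ := h1
        _ ≤ 3 * (ε₁ * r ^ k)
            + ‖ψ‖ * (k:ℝ) * (t * (‖χ‖ + B)) ^ (k-1) * (ε₁ * t * B) := add_le_add hQsub hψest
        _ = ε₁ * C * t ^ k := by rw [h2, h3, h4]
    refine hfinal.trans ?_
    exact mul_le_mul_of_nonneg_right hε₁C (pow_nonneg ht0.le k)
  -- coefficients of the polynomial t ↦ P (t•χ) - Q (t•χ)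
  set c : ℕ → ↥Tᗮ := fun i =>
    if i = k then φ k (fun _ => χ) - ψ (fun _ => χ) else φ i (fun _ => χ) with hcdef
  have hc : ∀ t : ℝ, ∑ i ∈ Finset.range (k+1), t ^ i • c i = P (t • χ) - Q (t • χ) := by
    intro t
    have split : ∀ i ∈ Finset.range (k+1), t ^ i • c i
        = t ^ i • (φ i fun _ => χ) - (if i = k then t ^ k • ψ (fun _ => χ) else 0) := by
      intro i _
      by_cases hik : i = k
      · subst hik; simp [hcdef, smul_sub]
      · simp [hcdef, hik]
    rw [Finset.sum_congr rfl split, Finset.sum_sub_distrib,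
      Finset.sum_ite_eq' (Finset.range (k+1)) k fun _ => t ^ k • ψ (fun _ => χ),
      if_pos (Finset.self_mem_range_succ k), hφ, hψ, hsmulψ]
    congr 1
    exact Finset.sum_congr rfl fun i _ => (hsmulφ t χ i).symm
  have hall : ∀ j, j ≤ k → c j = 0 := by
    refine poly_coeff_zero k c ?_
    intro ε hε
    obtain ⟨δ, hδ, hd⟩ := key ε hε
    exact ⟨δ, hδ, fun t ht0 htδ => by rw [hc]; exact hd t ht0 htδ⟩
  -- conclude
  have hck : φ k (fun _ => χ) = ψ (fun _ => χ) := by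
    have := hall k le_rfl
    rw [hcdef] at this
    simpa [sub_eq_zero] using this
  have hci : ∀ i < k, φ i (fun _ => χ) = 0 := by
    intro i hik
    simpa [hcdef, hik.ne] using hall i hik.le
  rw [hφ, hψ, Finset.sum_range_succ, Finset.sum_eq_zero (fun i hi =>
    hci i (Finset.mem_range.1 hi)), zero_add, hck]
end
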